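/- For non-commutative toric data, for any m ∈ M there exists ζ ∈ M_o^+ such that m + ζ ∈ M^+. Equivalently, M_o^+ contains a point in the interior of the cone M^+ (an element pairing strictly positively with every nonzero element of N^+). -/

import Mathlib

/-!
Non-commutative toric data `(N, Q₀, d, N⁺)`: a finite set `Q₀`, a lattice `N`, a lattice
map `d : ℤ^{Q₀} → N` whose kernel is `ℤ·𝟙`, and a saturated submonoid `N⁺` of `N` coming
from a strongly convex rational polyhedral cone, such that (1) `M_{ij}⁺ ≠ ∅` for all
`i, j ∈ Q₀`, and (2) `N⁺` is the dual of the monoid generated by all the `M_{ij}⁺`.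
Here `M = N^∨` is the dual lattice (modelled as `N →+ ℤ`), `∂ = d^∨`,
`M⁺ = (N⁺)^∨`, `M_{ij} = ∂⁻¹(j − i)`, `M_{ij}⁺ = M_{ij} ∩ M⁺` and `M_o = ∂⁻¹(0)`.
-/

section ToricData

variable {Q0 : Type} {N : Type} [AddCommGroup N]

/-- `m ∈ M⁺ = (N⁺)^∨ `: `m` is non-negative on the cone `N⁺`. -/
def MemMPlus (Nplus : AddSubmonoid N) (m : N →+ ℤ) : Prop :=
  ∀ n ∈ Nplus, 0 ≤ m n

/-- `∂ m = j − i`, i.e. `m ∈ M_{ij} = ∂⁻¹(j − i)`, where `∂` is dual to `d`. -/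
def MemMij [DecidableEq Q0] (d : (Q0 → ℤ) →+ N) (i j : Q0) (m : N →+ ℤ) : Prop :=
  ∀ v : Q0, m (d (Pi.single v 1)) = (if v = j then 1 else 0) - (if v = i then 1 else 0)

/-- `m ∈ M_{ij}⁺ = M_{ij} ∩ M⁺`. -/
def MemMijPlus [DecidableEq Q0] (d : (Q0 → ℤ) →+ N) (Nplus : AddSubmonoid N)
    (i j : Q0) (m : N →+ ℤ) : Prop :=
  MemMPlus Nplus m ∧ MemMij d i j m

/-- `m ∈ M_o = ∂⁻¹(0)`: `m` kills the image of `d`. -/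
def MemMo [DecidableEq Q0] (d : (Q0 → ℤ) →+ N) (m : N →+ ℤ) : Prop :=
  ∀ v : Q0, m (d (Pi.single v 1)) = 0

/-- `m ∈ M_o⁺ = M_o ∩ M⁺`. -/
def MemMoPlus [DecidableEq Q0] (d : (Q0 → ℤ) →+ N) (Nplus : AddSubmonoid N) (m : N →+ ℤ) : Prop :=
  MemMPlus Nplus m ∧ MemMo d m

/-- The non-commutative toric algebra `B = C[\underline{M}⁺] = ⊕_{i,j} C[M_{ij}⁺]`,
viewed inside the matrix algebra `Mat_{Q₀}(C[M])`: `b` is the matrix of an element of `B`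
when the `(i,j)` entry is supported on `M_{ij}⁺`. -/
def MemB [DecidableEq Q0] (d : (Q0 → ℤ) →+ N) (Nplus : AddSubmonoid N)
    (b : Matrix Q0 Q0 (AddMonoidAlgebra ℂ (N →+ ℤ))) : Prop :=
  ∀ i j : Q0, ∀ m ∈ (b i j).coeff.support, MemMijPlus d Nplus i j m

end ToricData

/-!
For non-commutative toric data `(N, Q₀, d, N⁺)` (with `N⁺` the saturated monoid of a
strongly convex rational polyhedral cone), for any `m ∈ M` there exists `ζ ∈ M_o⁺` such
that `m + ζ ∈ M⁺`.  Equivalently, `M_o⁺` contains a point of the interior of the cone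
`M⁺`: an element pairing strictly positively with every nonzero element of `N⁺`.
-/
theorem Mo_plus_shifts_into_M_plus
    {Q0 : Type} [Fintype Q0] [DecidableEq Q0]
    {N : Type} [AddCommGroup N]
    (d : (Q0 → ℤ) →+ N)
    (hker : ∀ x : Q0 → ℤ, d x = 0 ↔ ∃ c : ℤ, ∀ v : Q0, x v = c)
    (Nplus : AddSubmonoid N)
    -- `N⁺` is cut out by finitely many rational inequalities (rational polyhedral, saturated)
    (hpoly : ∃ S : Finset (N →+ ℤ), ∀ n : N, n ∈ Nplus ↔ ∀ φ ∈ S, 0 ≤ φ n)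
    -- `N⁺` is finitely generated (Gordan)
    (hfg : ∃ s : Finset N, AddSubmonoid.closure (s : Set N) = Nplus)
    (hsat : ∀ (n : N) (k : ℕ), 0 < k → k • n ∈ Nplus → n ∈ Nplus)
    (hconvex : ∀ n : N, n ∈ Nplus → -n ∈ Nplus → n = 0)
    (hne : ∀ i j : Q0, ∃ m : N →+ ℤ, MemMijPlus d Nplus i j m)
    (hdual : ∀ n : N,
      (∀ (i j : Q0) (m : N →+ ℤ), MemMijPlus d Nplus i j m → 0 ≤ m n) → n ∈ Nplus) :
    (∀ m : N →+ ℤ, ∃ ζ : N →+ ℤ, MemMoPlus d Nplus ζ ∧ MemMPlus Nplus (m + ζ)) ∧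
    (∃ ζ : N →+ ℤ, MemMoPlus d Nplus ζ ∧ ∀ n ∈ Nplus, n ≠ 0 → 0 < ζ n)  := by
  classical
  choose mij hmij using hne
  obtain ⟨s, hs⟩ := hfg
  have hmem : ∀ g ∈ s, g ∈ Nplus := fun g hg => by
    rw [← hs]; exact AddSubmonoid.subset_closure hg
  -- for each nonzero g ∈ N⁺ there is ζ ∈ M_o⁺ with ζ g > 0
  have key : ∀ g : N, ∃ ζ : N →+ ℤ, MemMoPlus d Nplus ζ ∧ (g ∈ Nplus → g ≠ 0 → 0 < ζ g) := by
    intro g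
    by_cases hg : g ∈ Nplus ∧ g ≠ 0
    · obtain ⟨hg1, hg2⟩ := hg
      have hng : ¬ (-g ∈ Nplus) := fun h => hg2 (hconvex g hg1 h)
      have hh := mt (hdual (-g)) hng
      push_neg at hh
      obtain ⟨i, j, m, hm, hmg⟩ := hh
      refine ⟨m + mij j i, ⟨?_, ?_⟩, fun _ _ => ?_⟩
      · intro n hn
        have h1 := hm.1 n hn
        have h2 := (hmij j i).1 n hn
        simp only [AddMonoidHom.add_apply]; omega
      · intro v
        have h1 := hm.2 v
        have h2 := (hmij j i).2 v
        simp only [AddMonoidHom.add_apply, h1, h2]; ring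
      · have h1 : 0 < m g := by
          have hneg : m (-g) < 0 := hmg
          rw [map_neg] at hneg; omega
        have h2 : 0 ≤ (mij j i) g := (hmij j i).1 g hg1
        simp only [AddMonoidHom.add_apply]; omega
    · exact ⟨0, ⟨fun n _ => le_refl 0, fun v => rfl⟩,
        fun h1 h2 => absurd ⟨h1, h2⟩ hg⟩
  choose zeta hz hpos using key
  set ζ : N →+ ℤ := ∑ g ∈ s, zeta g with hζdef
  have hζapp : ∀ n : N, ζ n = ∑ g ∈ s, zeta g n := fun n =>
    AddMonoidHom.finset_sum_apply zeta s n
  have hζMo : MemMoPlus d Nplus ζ := by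
    constructor
    · intro n hn
      rw [hζapp]
      exact Finset.sum_nonneg fun g _ => (hz g).1 n hn
    · intro v
      rw [hζapp]
      exact Finset.sum_eq_zero fun g _ => (hz g).2 v
  -- strict positivity on generators
  have hgenpos : ∀ g ∈ s, g ≠ 0 → 0 < ζ g := by
    intro g hg hg0
    rw [hζapp]
    refine Finset.sum_pos' (fun h _ => (hz h).1 g (hmem g hg)) ⟨g, hg, ?_⟩
    exact hpos g (hmem g hg) hg0
  -- strict positivity on all of N⁺
  have hstrict : ∀ n ∈ Nplus, n ≠ 0 → 0 < ζ n := by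
    intro n hn hn0
    have hn' : n ∈ AddSubmonoid.closure (s : Set N) := by rw [hs]; exact hn
    have main : 0 ≤ ζ n ∧ (n ≠ 0 → 0 < ζ n) := by
      refine AddSubmonoid.closure_induction
        (motive := fun x _ => 0 ≤ ζ x ∧ (x ≠ 0 → 0 < ζ x)) ?_ ?_ ?_ hn'
      · intro x hx
        exact ⟨(hζMo.1 x (hmem x hx)), hgenpos x hx⟩
      · simp
      · intro x y hx hy ⟨hx1, hx2⟩ ⟨hy1, hy2⟩
        constructor
        · rw [map_add]; omega
        · intro hxy
          rcases eq_or_ne x 0 with rfl | hx0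
          · rcases eq_or_ne y 0 with rfl | hy0
            · exact absurd (add_zero (0:N)) hxy
            · have := hy2 hy0; rw [map_add]; omega
          · have := hx2 hx0; rw [map_add]; omega
    exact main.2 hn0
  refine ⟨?_, ζ, hζMo, hstrict⟩
  -- shifting part
  intro m
  set k : ℕ := ∑ g ∈ s, (m g).natAbs with hkdef
  refine ⟨k • ζ, ⟨?_, ?_⟩, ?_⟩
  · intro n hn
    have h0 : (k • ζ) n = (k : ℤ) * ζ n := by
      show k • ζ n = (k : ℤ) * ζ n
      simp [nsmul_eq_mul]
    rw [h0]
    have := hζMo.1 n hn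
    positivity
  · intro v
    show k • ζ (d (Pi.single v 1)) = 0
    rw [hζMo.2 v, smul_zero]
  · intro n hn
    have hn' : n ∈ AddSubmonoid.closure (s : Set N) := by rw [hs]; exact hn
    have main : 0 ≤ (m + k • ζ) n := by
      refine AddSubmonoid.closure_induction
        (motive := fun x _ => 0 ≤ (m + k • ζ) x) ?_ ?_ ?_ hn'
      · intro g hg
        show 0 ≤ m g + k • ζ g
        rcases eq_or_ne g 0 with rfl | hg0
        · simp
        · have h1 : 1 ≤ ζ g := hgenpos g hg hg0
          have h2 : ((m g).natAbs : ℤ) ≤ (k : ℤ) := by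
            rw [hkdef]
            exact_mod_cast Finset.single_le_sum
              (f := fun g => (m g).natAbs) (fun _ _ => Nat.zero_le _) hg
          have h3 : (k : ℤ) * 1 ≤ (k : ℤ) * ζ g :=
            mul_le_mul_of_nonneg_left h1 (by positivity)
          have h4 : -(m g) ≤ ((m g).natAbs : ℤ) := by omega
          have h5 : k • ζ g = (k : ℤ) * ζ g := by simp [nsmul_eq_mul]
          rw [h5]; linarith
      · simp
      · intro x y hx hy h1 h2
        rw [map_add]; omega
    exact main
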